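/- Type II, Red winning when Blue touches β: on a type II board with long b-pile β, if m_b ≥ 0 and m_b + |β|_b ≤ n_r when Blue's turn starts, and Blue places a chip (blue or red) on β during their current round, then Red wins by applying strategy S at every round. -/

import Mathlib

/-!  A model of the two-player, two-color endgame of *So Long Sucker*.

The two remaining players are Blue and Red, identified with their colors.
A pile is a finite sequence of chips (head = top chip).  A game state
records the board, the number of chips of each color held by each player,
and the active player. -/

/-- The two chip colors (also naming the two remaining players). -/
inductive Color : Type
  | b : Color
  | r : Color
deriving DecidableEq, Repr

/-- The opponent's color. -/
def Color.other : Color → Color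
  | Color.b => Color.r
  | Color.r => Color.b

/-- A pile of chips; the head of the list is the top chip. -/
abbrev Pile := List Color

/-- A game state: the board (a list of piles), the chip counts
`chips p c` = number of `c`-colored chips held by player `p`,
and the active player. -/
structure GState where
  board : List Pile
  chips : Color → Color → ℕ
  active : Color

/-- Total number of chips in player `p`'s possession. -/
def totalChips (s : GState) (p : Color) : ℕ :=
  s.chips p Color.b + s.chips p Color.r

/-- The Next Player Rule in the two-player, two-color endgame, as a function
of the pile played on (before the placement) and the color of the placed
chip: if the placement triggers a capture, the capturing player moves next;
otherwise the player of the other color than the placed chip moves next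
(this is the unique player allowed by the Next Player Rule). -/
def nextActive (π : Pile) (c : Color) : Color :=
  if π.head? = some c then c else c.other

/-- Placement of a chip of color `c` on pile number `i` by the active
player, with the Capture Rule and Next Player Rule applied. -/
inductive PlaceOn (i : ℕ) : GState → GState → Prop
  | noCapture (s : GState) (c : Color)
      (hi : i < s.board.length)
      (hc : 0 < s.chips s.active c)
      (hcap : (s.board.getD i []).head? ≠ some c) :
      PlaceOn i s
        { board := s.board.set i (c :: s.board.getD i []),
          chips := fun p x =>
            s.chips p x - (if p = s.active ∧ x = c then 1 else 0),
          active := c.other }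
  | capture (s : GState) (c : Color) (d : Color)
      (hi : i < s.board.length)
      (hc : 0 < s.chips s.active c)
      (hcap : (s.board.getD i []).head? = some c)
      (hd : d ∈ c :: s.board.getD i []) :
      PlaceOn i s
        { board := s.board.set i [],
          chips := fun p x =>
            (s.chips p x - (if p = s.active ∧ x = c then 1 else 0))
              + (if p = c then
                  (c :: s.board.getD i []).count x - (if d = x then 1 else 0)
                 else 0),
          active := c }

/-- One legal move of the active player: placing a chip on some pile
(resolving captures), discarding a prisoner, or donating a prisoner
to the opponent. -/
inductive Step : GState → GState → Prop
  | place (i : ℕ) (s s' : GState) (h : PlaceOn i s s') : Step s s'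
  | discardPrisoner (s : GState)
      (hc : 0 < s.chips s.active s.active.other) :
      Step s
        { board := s.board,
          chips := fun p x =>
            s.chips p x - (if p = s.active ∧ x = s.active.other then 1 else 0),
          active := s.active }
  | donatePrisoner (s : GState)
      (hc : 0 < s.chips s.active s.active.other) :
      Step s
        { board := s.board,
          chips := fun p x =>
            if x = s.active.other then
              (if p = s.active then s.chips p x - 1 else s.chips p x + 1)
            else s.chips p x,
          active := s.active }

/-- Player `p` has a winning strategy from state `s`: either the opponent is
to move with no chips (and `p` refuses to donate), so the opponent is
eliminated and `p` wins; or it is `p`'s turn and some move of `p` leads to a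
winning position; or it is the opponent's turn and every move of the opponent
leads to a position winning for `p`. -/
inductive WinsFor (p : Color) : GState → Prop
  | elim (s : GState) (h : s.active ≠ p) (h0 : totalChips s s.active = 0) :
      WinsFor p s
  | mine (s s' : GState) (h : s.active = p) (hs : Step s s')
      (hw : WinsFor p s') : WinsFor p s
  | theirs (s : GState) (h : s.active ≠ p) (h0 : 0 < totalChips s s.active)
      (hw : ∀ s', Step s s' → WinsFor p s') : WinsFor p s

/-- The index of the pile on which strategy `S` places its guard:
the longest pile whose top chip has the opponent's color `q`,
or an empty pile if there is no `q`-pile. -/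
def targetIdx (q : Color) (l : List Pile) : ℕ :=
  let opp := l.filter (fun π => π.head? == some q)
  if opp.isEmpty then
    l.findIdx (fun π => π.isEmpty)
  else
    l.findIdx (fun π =>
      (π.head? == some q) &&
        (π.length == (opp.map List.length).foldr Nat.max 0))

/-- The state resulting from the active player `p` playing one full round of
strategy `S`: capture every `p`-pile (discarding an opponent chip from a
captured pile when it contains one, and a `p` chip otherwise), discard all
prisoners, and finally place one guard on the longest opponent-colored pile,
or on an empty pile if there is none.  The turn then passes to the
opponent. -/
def SRound (s : GState) : GState :=
  let p := s.active
  let q := p.other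
  let capt := s.board.filter (fun π => π.head? == some p)
  let b1 := s.board.map (fun π => if π.head? == some p then ([] : Pile) else π)
  let g1 := s.chips p p +
      (capt.map (fun π =>
        if π.contains q then π.count p else π.count p - 1)).sum
  let i := targetIdx q b1
  { board := b1.set i (p :: b1.getD i []),
    chips := fun pl x =>
      if pl = p then (if x = p then g1 - 1 else 0) else s.chips pl x,
    active := q }

/-- Player `p` wins by applying strategy `S` at each of `p`'s rounds,
whatever the opponent plays. -/
inductive WinsWithS (p : Color) : GState → Prop
  | elim (s : GState) (h : s.active ≠ p) (h0 : totalChips s s.active = 0) :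
      WinsWithS p s
  | mine (s : GState) (h : s.active = p) (hg : 0 < s.chips p p)
      (hw : WinsWithS p (SRound s)) : WinsWithS p s
  | theirs (s : GState) (h : s.active ≠ p) (h0 : 0 < totalChips s s.active)
      (hw : ∀ s', Step s s' → WinsWithS p s') : WinsWithS p s

/-- Every pile on the board is an alternating sequence of colors. -/
def Alternating (l : List Pile) : Prop := ∀ π ∈ l, π.Chain' (· ≠ ·)

/-- The long piles (length at least 2) whose top chip has color `c`. -/
def longPiles (c : Color) (l : List Pile) : List Pile :=
  l.filter (fun π => decide (2 ≤ π.length) && (π.head? == some c))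

/-- The sum, over all long `c`-piles, of the number of `c` chips they
contain (e.g. `Σᵢ |ρᵢ|_r` for `c = r`). -/
def longSum (c : Color) (l : List Pile) : ℕ :=
  ((longPiles c l).map (fun π => π.count c)).sum

/-- The maximum, over all long `c`-piles, of the number of `c` chips they
contain (`0` if there is no long `c`-pile). -/
def longMax (c : Color) (l : List Pile) : ℕ :=
  ((longPiles c l).map (fun π => π.count c)).foldr Nat.max 0

/-- The total number of chips in the game (in hands and on the board). -/
def chipCount (s : GState) : ℕ :=
  totalChips s Color.b + totalChips s Color.r + (s.board.map List.length).sum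

lemma Color.eq_b_or_r (c : Color) : c = Color.b ∨ c = Color.r := by cases c <;> simp
lemma Color.other_other (c : Color) : c.other.other = c := by cases c <;> rfl
lemma Color.eq_other_of_ne {c d : Color} (h : d ≠ c) : d = c.other := by
  cases c <;> cases d <;> simp_all [Color.other]

lemma count_b_add_count_r (π : Pile) : π.count Color.b + π.count Color.r = π.length := by
  induction π with
  | nil => simp
  | cons a t ih =>
      cases a <;> simp [List.count_cons, ih] <;> omega

lemma sum_map_set {α : Type*} (f : α → ℕ) (l : List α) (i : ℕ) (a d : α) (h : i < l.length) :
    ((l.set i a).map f).sum + f (l.getD i d) = (l.map f).sum + f a := by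
  induction l generalizing i with
  | nil => simp at h
  | cons x t ih =>
      cases i with
      | zero => simp [List.set, List.getD]; ring
      | succ n =>
          simp only [List.set, List.map_cons, List.sum_cons, List.getD, List.getElem?_cons_succ]
          have := ih n (by simpa using h)
          simp only [List.getD] at this
          omega

lemma sum_filter_map {α : Type*} (p : α → Bool) (f : α → ℕ) (l : List α) :
    ((l.filter p).map f).sum = (l.map (fun a => if p a then f a else 0)).sum := by
  induction l with
  | nil => rfl
  | cons a t ih => by_cases h : p a <;> simp [List.filter_cons, h, ih]

lemma foldr_max_mem (l : List ℕ) (h : l ≠ []) : l.foldr Nat.max 0 ∈ l := by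
  induction l with
  | nil => simp at h
  | cons a t ih =>
      cases t with
      | nil => simp
      | cons b u =>
          have ht : List.foldr Nat.max 0 (b :: u) ∈ b :: u := ih (by simp)
          simp only [List.foldr_cons] at ht ⊢
          rcases le_total a (Nat.max b (List.foldr Nat.max 0 u)) with h1 | h1
          · have e : Nat.max a (Nat.max b (List.foldr Nat.max 0 u))
                = Nat.max b (List.foldr Nat.max 0 u) := Nat.max_eq_right h1
            rw [e]; exact List.mem_cons_of_mem _ ht
          · have e : Nat.max a (Nat.max b (List.foldr Nat.max 0 u)) = a := Nat.max_eq_left h1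
            rw [e]; exact List.mem_cons_self

lemma le_foldr_max {a : ℕ} {l : List ℕ} (h : a ∈ l) : a ≤ l.foldr Nat.max 0 := by
  induction l with
  | nil => simp at h
  | cons b t ih =>
      rcases List.mem_cons.1 h with h | h
      · subst h; exact le_max_left _ _
      · exact le_trans (ih h) (le_max_right _ _)

lemma alt_count : ∀ (π : Pile), π.Chain' (· ≠ ·) → ∀ c, π.head? = some c →
    2 * π.count c = π.length + π.length % 2 ∧
      2 * π.count c.other + π.length % 2 = π.length := by
  intro π
  induction π with
  | nil => intro _ c hc; simp at hc
  | cons a t ih =>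
      intro h c hc
      simp only [List.head?_cons, Option.some_inj] at hc
      obtain rfl : c = a := (show a = c by simpa using hc).symm
      change List.IsChain _ (_ :: _) at h
      rw [List.isChain_cons] at h
      obtain ⟨hh, ht⟩ := h
      have hco : c.other ≠ c := by cases c <;> simp [Color.other]
      cases t with
      | nil => cases c <;> simp [Color.other]
      | cons d u =>
          have hd : d = c.other := Color.eq_other_of_ne (fun hdc => hh d (by simp) hdc.symm)
          subst hd
          obtain ⟨h1, h2⟩ := ih ht c.other rfl
          rw [Color.other_other] at h2
          simp only [List.count_cons_self, List.count_cons_of_ne hco.symm,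
            List.count_cons_of_ne hco, List.length_cons] at h1 h2 ⊢
          constructor <;> omega
/-- Contribution of a pile to `longSum Color.b`. -/
def gB (π : Pile) : ℕ :=
  if 2 ≤ π.length ∧ π.head? = some Color.b then π.count Color.b else 0

/-- Contribution of a pile to Red's capture gain in `SRound`. -/
def gainP (π : Pile) : ℕ :=
  if π.head? = some Color.r then
    (if π.contains Color.b then π.count Color.r else π.count Color.r - 1)
  else 0

def capGain (l : List Pile) : ℕ := (l.map gainP).sum

lemma longSum_eq (l : List Pile) : longSum Color.b l = (l.map gB).sum := by
  rw [longSum, longPiles, sum_filter_map]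
  refine congrArg List.sum (List.map_congr_left fun π _ => ?_)
  by_cases h1 : 2 ≤ π.length <;> by_cases h2 : π.head? = some Color.b <;>
    simp [gB, h1, h2]

lemma mem_le_sum {α : Type*} (f : α → ℕ) {a : α} {l : List α} (h : a ∈ l) :
    f a ≤ (l.map f).sum := by
  induction l with
  | nil => simp at h
  | cons x t ih =>
      rcases List.mem_cons.1 h with h | h
      · subst h; simp
      · simp only [List.map_cons, List.sum_cons]
        exact le_trans (ih h) (Nat.le_add_left _ _)

lemma sum_map_add {α : Type*} (f g : α → ℕ) (l : List α) :
    (l.map (fun a => f a + g a)).sum = (l.map f).sum + (l.map g).sum := by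
  induction l with
  | nil => rfl
  | cons x t ih => simp [ih]; ring

/-- Specification of `targetIdx Color.b`. -/
lemma targetIdx_spec (l : List Pile) (halt : ∀ π ∈ l, π.Chain' (· ≠ ·)) :
    (l.getD (targetIdx Color.b l) []).head? ≠ some Color.r ∧
    (∀ π ∈ l, π.head? = some Color.b → 2 ≤ π.length →
      π.count Color.b ≤ gB (l.getD (targetIdx Color.b l) [])) ∧
    (∀ π ∈ l, π.head? = some Color.b → targetIdx Color.b l < l.length) := by
  rw [targetIdx]
  set opp := l.filter (fun π => π.head? == some Color.b) with hopp
  by_cases he : opp.isEmpty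
  · simp only [he, if_true]
    have hno : ∀ π ∈ l, π.head? ≠ some Color.b := by
      intro π hπ hb
      have : π ∈ opp := by
        rw [hopp]; exact List.mem_filter.2 ⟨hπ, by simp [hb]⟩
      rw [List.isEmpty_iff] at he
      simp [he] at this
    constructor
    · by_cases hj : l.findIdx (fun π => π.isEmpty) < l.length
      · rw [List.getD_eq_getElem _ _ hj]
        have := List.findIdx_getElem (w := hj)
        simp only [List.isEmpty_iff] at this
        simp [this]
      · rw [List.getD_eq_default _ _ (not_lt.mp hj)]
        simp
    · refine ⟨fun π hπ hb _ => absurd hb (hno π hπ), fun π hπ hb => absurd hb (hno π hπ)⟩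
  · rw [Bool.not_eq_true] at he
    simp only [he, Bool.false_eq_true, if_false]
    -- opp is nonempty; the max length is attained
    have hopn : opp ≠ [] := by
      intro h0; rw [h0] at he; simp at he
    set M := ((opp.map List.length).foldr Nat.max 0) with hM
    have hmem : M ∈ opp.map List.length := by
      rw [hM]; exact foldr_max_mem _ (by simpa using hopn)
    obtain ⟨σ₀, hσ₀, hlen₀⟩ := List.mem_map.1 hmem
    have hσ₀l : σ₀ ∈ l := (List.mem_filter.1 hσ₀).1
    have hσ₀b : σ₀.head? = some Color.b := by
      have := (List.mem_filter.1 hσ₀).2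
      simpa using this
    set p := (fun π : Pile =>
      (π.head? == some Color.b) && (π.length == (opp.map List.length).foldr Nat.max 0)) with hp
    have hex : ∃ x ∈ l, p x := ⟨σ₀, hσ₀l, by simp [hp, hσ₀b, hlen₀, ← hM]⟩
    have hj : l.findIdx p < l.length := List.findIdx_lt_length_of_exists hex
    have hjp := List.findIdx_getElem (w := hj)
    rw [List.getD_eq_getElem _ _ hj]
    set σ := l[l.findIdx p] with hσ
    simp only [hp, Bool.and_eq_true, beq_iff_eq] at hjp
    obtain ⟨hσb, hσlen⟩ := hjp
    constructor
    · simp [hσb]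
    · constructor
      · intro π hπ hb hlong
        have hπopp : π ∈ opp := List.mem_filter.2 ⟨hπ, by simp [hb]⟩
        have hle : π.length ≤ M := le_foldr_max (List.mem_map_of_mem hπopp)
        have hσlong : 2 ≤ σ.length := by omega
        obtain ⟨hc1, _⟩ := alt_count π (halt π hπ) Color.b hb
        obtain ⟨hc2, _⟩ := alt_count σ (halt σ (List.getElem_mem hj)) Color.b hσb
        have : π.count Color.b ≤ σ.count Color.b := by omega
        rw [gB, if_pos ⟨hσlong, hσb⟩]
        exact this
      · intro π hπ hb
        exact hj
/-- The board after Red's captures in `SRound`. -/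
def rbo (l : List Pile) : List Pile :=
  l.map fun π => if π.head? == some Color.r then ([] : Pile) else π

/-- The board after a full `SRound` of Red. -/
def SRboard (l : List Pile) : List Pile :=
  (rbo l).set (targetIdx Color.b (rbo l))
    (Color.r :: (rbo l).getD (targetIdx Color.b (rbo l)) [])

lemma SRound_eq (s : GState) (hact : s.active = Color.r) :
    SRound s = { board := SRboard s.board,
                 chips := fun pl x => if pl = Color.r then
                     (if x = Color.r then s.chips Color.r Color.r + capGain s.board - 1 else 0)
                   else s.chips pl x,
                 active := Color.b } := by
  have hg : ((s.board.filter (fun π => π.head? == some Color.r)).map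
      (fun π => if π.contains Color.b then π.count Color.r else π.count Color.r - 1)).sum
      = capGain s.board := by
    rw [sum_filter_map, capGain]
    refine congrArg List.sum (List.map_congr_left fun π _ => ?_)
    by_cases h : π.head? = some Color.r <;> simp [gainP, h]
  rw [SRound]
  simp only [hact, Color.other, hg]
  rfl
lemma rbo_alt (s : List Pile) (halt : Alternating s) : ∀ π ∈ rbo s, π.Chain' (· ≠ ·) := by
  intro π hπ
  obtain ⟨π₀, hπ₀, rfl⟩ := List.mem_map.1 hπ
  by_cases h : π₀.head? = some Color.r
  · simp [h]; exact List.isChain_nil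
  · simpa [h] using halt π₀ hπ₀

lemma rbo_gBsum (s : List Pile) : ((rbo s).map gB).sum = (s.map gB).sum := by
  rw [rbo, List.map_map]
  refine congrArg List.sum (List.map_congr_left fun π _ => ?_)
  by_cases h : π.head? = some Color.r
  · simp only [Function.comp_apply]
    rw [if_pos (by simp [h] : (π.head? == some Color.r) = true)]
    have e1 : gB ([] : Pile) = 0 := by simp [gB]
    have e2 : gB π = 0 := by
      rw [gB, if_neg]; rintro ⟨-, hb⟩; rw [hb] at h; simp at h
    rw [e1, e2]
  · simp [h]

lemma mem_rbo (s : List Pile) {π : Pile} (hπ : π ∈ s) (hb : π.head? = some Color.b) :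
    π ∈ rbo s := by
  have : (fun π : Pile => if π.head? == some Color.r then ([] : Pile) else π) π = π := by
    simp [hb]
  rw [rbo, ← this]
  exact List.mem_map_of_mem hπ

lemma SRboard_alt (s : List Pile) (halt : Alternating s) : Alternating (SRboard s) := by
  intro π hπ
  rcases List.mem_or_eq_of_mem_set hπ with h | h
  · exact rbo_alt s halt π h
  · subst h
    show List.IsChain _ (_ :: _)
    rw [List.isChain_cons]
    obtain ⟨hhead, -, -⟩ := targetIdx_spec (rbo s) (rbo_alt s halt)
    set σ := (rbo s).getD (targetIdx Color.b (rbo s)) [] with hσ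
    constructor
    · intro y hy hry
      apply hhead
      rw [Option.mem_def] at hy
      rw [hy, ← hry]
    · by_cases hj : targetIdx Color.b (rbo s) < (rbo s).length
      · rw [hσ, List.getD_eq_getElem _ _ hj]
        exact rbo_alt s halt _ (List.getElem_mem hj)
      · rw [hσ, List.getD_eq_default _ _ (not_lt.mp hj)]
        simp

lemma SRboard_longSum (s : List Pile) (halt : Alternating s) :
    longSum Color.b (SRboard s) ≤ longSum Color.b s ∧
    ∀ π ∈ s, π.head? = some Color.b → 2 ≤ π.length →
      longSum Color.b (SRboard s) + π.count Color.b ≤ longSum Color.b s := by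
  obtain ⟨hhead, hcnt, hlt⟩ := targetIdx_spec (rbo s) (rbo_alt s halt)
  rw [longSum_eq, longSum_eq, ← rbo_gBsum s]
  by_cases hj : targetIdx Color.b (rbo s) < (rbo s).length
  · have hset := sum_map_set gB (rbo s) (targetIdx Color.b (rbo s))
      (Color.r :: (rbo s).getD (targetIdx Color.b (rbo s)) []) [] hj
    have h0 : gB (Color.r :: (rbo s).getD (targetIdx Color.b (rbo s)) []) = 0 := by
      simp [gB]
    rw [SRboard]
    constructor
    · omega
    · intro π hπ hb hlong
      have h1 : π.count Color.b ≤ gB ((rbo s).getD (targetIdx Color.b (rbo s)) []) :=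
        hcnt π (mem_rbo s hπ hb) hb hlong
      omega
  · rw [SRboard, List.set_eq_of_length_le (not_lt.mp hj)]
    exact ⟨le_refl _, fun π hπ hb _ => absurd (hlt π (mem_rbo s hπ hb) hb) hj⟩

lemma SRboard_lengthSum (s : List Pile) :
    capGain s + ((SRboard s).map List.length).sum ≤
      (s.map List.length).sum + 1 := by
  have h1 : capGain s + ((rbo s).map List.length).sum ≤
      (s.map List.length).sum := by
    rw [capGain, rbo, List.map_map, ← sum_map_add]
    refine List.sum_le_sum fun π _ => ?_
    have hcr : π.count Color.r ≤ π.length := List.count_le_length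
    simp only [Function.comp_apply]
    by_cases h : π.head? = some Color.r
    · rw [if_pos (by simp [h] : (π.head? == some Color.r) = true), gainP, if_pos h]
      simp only [List.length_nil]
      by_cases hc : List.contains π Color.b = true
      · rw [if_pos hc]; omega
      · rw [if_neg hc]; omega
    · rw [if_neg (by simp [h]), gainP, if_neg h]
      omega
  by_cases hj : targetIdx Color.b (rbo s) < (rbo s).length
  · have hset := sum_map_set List.length (rbo s) (targetIdx Color.b (rbo s))
      (Color.r :: (rbo s).getD (targetIdx Color.b (rbo s)) []) [] hj
    rw [SRboard]
    simp only [List.length_cons] at hset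
    omega
  · rw [SRboard, List.set_eq_of_length_le (not_lt.mp hj)]
    omega
lemma getD_mem (l : List Pile) (i : ℕ) (h : i < l.length) : l.getD i [] ∈ l := by
  rw [List.getD_eq_getElem _ _ h]; exact List.getElem_mem h

lemma mem_set_self (l : List Pile) (i : ℕ) (a : Pile) (h : i < l.length) : a ∈ l.set i a := by
  have h' : i < (l.set i a).length := by simpa using h
  have := List.getElem_mem h'
  rwa [List.getElem_set_self] at this

lemma count_pos_of_head (π : Pile) (c : Color) (h : π.head? = some c) : 0 < π.count c := by
  cases π with
  | nil => simp at h
  | cons a t =>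
      simp only [List.head?_cons, Option.some_inj] at h
      subst h
      simp [List.count_cons_self]

lemma eq_single_of_head (π : Pile) (c : Color) (h : π.head? = some c) (hl : π.length ≤ 1) :
    π = [c] := by
  cases π with
  | nil => simp at h
  | cons a t =>
      simp only [List.head?_cons, Option.some_inj] at h
      subst h
      cases t with
      | nil => rfl
      | cons x u => simp at hl

/-- The invariant when it's Blue's turn. -/
def GoodB (s : GState) : Prop :=
  s.active = Color.b ∧ Alternating s.board ∧
    s.chips Color.b Color.b + longSum Color.b s.board ≤ s.chips Color.r Color.r

/-- The invariant when it's Red's turn. -/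
def GoodR (s : GState) : Prop :=
  s.active = Color.r ∧ Alternating s.board ∧ 1 ≤ s.chips Color.r Color.r ∧
    s.chips Color.b Color.b + longSum Color.b (SRboard s.board) + 1 ≤
      s.chips Color.r Color.r + capGain s.board

/-- Termination measure. -/
def meas (s : GState) : ℕ :=
  2 * (chipCount s * chipCount s + chipCount s + totalChips s Color.b) +
    (if s.active = Color.r then 1 else 0)

lemma totalChips_le_chipCount (s : GState) : totalChips s Color.b ≤ chipCount s := by
  rw [chipCount]; omega

lemma meas_lt (s s' : GState) (hC : chipCount s' ≤ chipCount s)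
    (h : chipCount s' < chipCount s ∨ totalChips s' Color.b < totalChips s Color.b ∨
      (s.active = Color.r ∧ s'.active ≠ Color.r ∧
        totalChips s' Color.b ≤ totalChips s Color.b)) :
    meas s' < meas s := by
  have hB' : totalChips s' Color.b ≤ chipCount s' := totalChips_le_chipCount s'
  rw [meas, meas]
  rcases h with h | h | ⟨h1, h2, h3⟩
  · have hm : (chipCount s' + 1) * (chipCount s' + 1) ≤ chipCount s * chipCount s :=
      Nat.mul_le_mul h h
    have hm' : chipCount s' * chipCount s' + 2 * chipCount s' + 1
        ≤ chipCount s * chipCount s := by nlinarith [hm]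
    have e1 : (if s'.active = Color.r then 1 else 0) ≤ 1 := by split <;> omega
    have e2 : (0:ℕ) ≤ (if s.active = Color.r then 1 else 0) := by omega
    omega
  · have hm : chipCount s' * chipCount s' ≤ chipCount s * chipCount s :=
      Nat.mul_le_mul hC hC
    have e1 : (if s'.active = Color.r then 1 else 0) ≤ 1 := by split <;> omega
    omega
  · have hm : chipCount s' * chipCount s' ≤ chipCount s * chipCount s :=
      Nat.mul_le_mul hC hC
    rw [if_pos h1, if_neg h2]
    omega

lemma GoodR_SRound (s : GState) (h : GoodR s) :
    GoodB (SRound s) ∧ meas (SRound s) < meas s := by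
  obtain ⟨hact, halt, hr, hnum⟩ := h
  rw [SRound_eq s hact]
  have hls := SRboard_lengthSum s.board
  constructor
  · refine ⟨rfl, SRboard_alt s.board halt, ?_⟩
    simp only [show (Color.b = Color.r) = False by simp, show (Color.r = Color.r) = True by simp,
      if_true, if_false]
    omega
  · apply meas_lt
    · rw [chipCount, chipCount, totalChips, totalChips, totalChips, totalChips]
      simp only [show (Color.b = Color.r) = False by simp,
        show (Color.r = Color.r) = True by simp, if_true, if_false]
      omega
    · right; right
      refine ⟨hact, by simp, ?_⟩
      rw [totalChips, totalChips]
      simp only [show (Color.b = Color.r) = False by simp, if_false]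
      omega
lemma cbb : (Color.b = Color.b) = True := by simp
lemma crr : (Color.r = Color.r) = True := by simp
lemma crb : (Color.r = Color.b) = False := by simp
lemma cbr : (Color.b = Color.r) = False := by simp
lemma cob : Color.b.other = Color.r := rfl
lemma cor : Color.r.other = Color.b := rfl

lemma blue_step (s s' : GState) (hact : s.active = Color.b) (halt : Alternating s.board)
    (hineq : s.chips Color.b Color.b + longSum Color.b s.board ≤ s.chips Color.r Color.r)
    (hst : Step s s') :
    (GoodB s' ∨ GoodR s') ∧ chipCount s' ≤ chipCount s ∧
      (chipCount s' < chipCount s ∨ totalChips s' Color.b < totalChips s Color.b) := by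
  simp only [longSum_eq] at hineq
  cases hst with
  | place i u v hp =>
    cases hp with
    | noCapture c hi hc hcap =>
      rw [hact] at hc
      have hmem : s.board.getD i [] ∈ s.board := getD_mem _ _ hi
      have halt' : Alternating (s.board.set i (c :: s.board.getD i [])) := by
        intro π hπ
        rcases List.mem_or_eq_of_mem_set hπ with h | h
        · exact halt π h
        · subst h
          show List.IsChain _ (_ :: _)
          rw [List.isChain_cons]
          refine ⟨fun y hy hcy => ?_, halt _ hmem⟩
          rw [Option.mem_def] at hy
          exact hcap (by rw [hy, hcy])
      have hLS := sum_map_set gB s.board i (c :: s.board.getD i []) [] hi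
      have hlen := sum_map_set List.length s.board i (c :: s.board.getD i []) [] hi
      simp only [List.length_cons] at hlen
      cases c with
      | b =>
        obtain ⟨hSle, hSadd⟩ := SRboard_longSum (s.board.set i (Color.b :: s.board.getD i [])) halt'
        simp only [longSum_eq] at hSle hSadd
        refine ⟨Or.inr ⟨rfl, halt', ?_, ?_⟩, ?_, ?_⟩
        · dsimp only
          simp only [hact, cob, cor, cbb, crr, crb, cbr, and_self, and_true, true_and, and_false,
            false_and, if_true, if_false, Nat.sub_zero, Nat.add_zero, reduceIte]
          omega
        · dsimp only
          simp only [longSum_eq]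
          simp only [hact, cob, cor, cbb, crr, crb, cbr, and_self, and_true, true_and, and_false,
            false_and, if_true, if_false, Nat.sub_zero, Nat.add_zero, reduceIte]
          cases hh : (s.board.getD i []).head? with
          | none =>
            rw [List.head?_eq_none_iff] at hh
            have g1 : gB ([] : Pile) = 0 := by simp [gB]
            have g2 : gB [Color.b] = 0 := by simp [gB]
            rw [hh] at hLS hSle ⊢
            simp only [g1, g2] at hLS
            omega
          | some y =>
            cases y with
            | b => exact absurd hh hcap
            | r =>
              have hne : s.board.getD i [] ≠ [] := by
                intro h0; rw [h0] at hh; simp at hh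
              have hlong : 2 ≤ (Color.b :: s.board.getD i []).length := by
                cases h0 : s.board.getD i [] with
                | nil => exact absurd h0 hne
                | cons a t => simp [h0]
              have hmem' : (Color.b :: s.board.getD i []) ∈
                  s.board.set i (Color.b :: s.board.getD i []) :=
                mem_set_self _ i _ hi
              have hadd := hSadd _ hmem' rfl hlong
              have g1 : gB (s.board.getD i []) = 0 := by
                rw [gB, if_neg]
                rintro ⟨-, hb⟩
                rw [hh] at hb
                simp at hb
              have g2 : gB (Color.b :: s.board.getD i []) =
                  (Color.b :: s.board.getD i []).count Color.b := by
                rw [gB, if_pos ⟨hlong, rfl⟩]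
              rw [g1, g2] at hLS
              omega
        · rw [chipCount, chipCount, totalChips, totalChips, totalChips, totalChips]
          dsimp only
          simp only [hact, cob, cor, cbb, crr, crb, cbr, and_self, and_true, true_and, and_false,
            false_and, if_true, if_false, Nat.sub_zero, Nat.add_zero, reduceIte]
          omega
        · right
          rw [totalChips, totalChips]
          dsimp only
          simp only [hact, cob, cor, cbb, crr, crb, cbr, and_self, and_true, true_and, and_false,
            false_and, if_true, if_false, Nat.sub_zero, Nat.add_zero, reduceIte]
          omega
      | r =>
        refine ⟨Or.inl ⟨rfl, halt', ?_⟩, ?_, ?_⟩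
        · dsimp only
          simp only [longSum_eq]
          simp only [hact, cob, cor, cbb, crr, crb, cbr, and_self, and_true, true_and, and_false,
            false_and, if_true, if_false, Nat.sub_zero, Nat.add_zero, reduceIte]
          have g2 : gB (Color.r :: s.board.getD i []) = 0 := by simp [gB]
          rw [g2] at hLS
          omega
        · rw [chipCount, chipCount, totalChips, totalChips, totalChips, totalChips]
          dsimp only
          simp only [hact, cob, cor, cbb, crr, crb, cbr, and_self, and_true, true_and, and_false,
            false_and, if_true, if_false, Nat.sub_zero, Nat.add_zero, reduceIte]
          omega
        · right
          rw [totalChips, totalChips]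
          dsimp only
          simp only [hact, cob, cor, cbb, crr, crb, cbr, and_self, and_true, true_and, and_false,
            false_and, if_true, if_false, Nat.sub_zero, Nat.add_zero, reduceIte]
          omega
    | capture c d hi hc hcap hd =>
      rw [hact] at hc
      have hmem : s.board.getD i [] ∈ s.board := getD_mem _ _ hi
      have halt' : Alternating (s.board.set i []) := by
        intro π hπ
        rcases List.mem_or_eq_of_mem_set hπ with h | h
        · exact halt π h
        · subst h; exact List.isChain_nil
      have hLS := sum_map_set gB s.board i [] [] hi
      have hlen := sum_map_set List.length s.board i [] [] hi
      simp only [List.length_nil] at hlen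
      have g0 : gB ([] : Pile) = 0 := by simp [gB]
      rw [g0] at hLS
      have hcnt := count_b_add_count_r (c :: s.board.getD i [])
      have hdany : ∀ x : Color, (if d = x then (1:ℕ) else 0) ≤
          (c :: s.board.getD i []).count x := by
        intro x
        split
        · rename_i h; rw [h] at hd; exact List.count_pos_iff.2 hd
        · omega
      have hdb := hdany Color.b
      have hdr := hdany Color.r
      have heb : (if d = Color.b then (1:ℕ) else 0) + (if d = Color.r then 1 else 0) = 1 := by
        cases d <;> simp
      have hπlen : 1 ≤ (s.board.getD i []).length := by
        cases h0 : s.board.getD i [] with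
        | nil => rw [h0] at hcap; simp at hcap
        | cons a t => simp
      cases c with
      | b =>
        refine ⟨Or.inl ⟨rfl, halt', ?_⟩, ?_, ?_⟩
        · dsimp only
          simp only [longSum_eq]
          simp only [hact, cob, cor, cbb, crr, crb, cbr, and_self, and_true, true_and, and_false,
            false_and, if_true, if_false, Nat.sub_zero, Nat.add_zero, reduceIte]
          by_cases hlong : 2 ≤ (s.board.getD i []).length
          · have g1 : gB (s.board.getD i []) = (s.board.getD i []).count Color.b := by
              rw [gB, if_pos ⟨hlong, hcap⟩]
            rw [g1] at hLS
            have hcc : (Color.b :: s.board.getD i []).count Color.b =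
                (s.board.getD i []).count Color.b + 1 := List.count_cons_self
            omega
          · have hsingle : s.board.getD i [] = [Color.b] :=
              eq_single_of_head _ _ hcap (by omega)
            have g1 : gB (s.board.getD i []) = 0 := by rw [hsingle]; simp [gB]
            have hdbb : d = Color.b := by
              rw [hsingle] at hd
              rcases List.mem_cons.1 hd with h | h
              · exact h
              · simpa using h
            rw [g1] at hLS
            rw [hsingle, hdbb]
            simp only [show List.count Color.b [Color.b, Color.b] = 2 by rfl]
            rw [if_pos trivial]
            omega
        · rw [chipCount, chipCount, totalChips, totalChips, totalChips, totalChips]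
          dsimp only
          simp only [hact, cob, cor, cbb, crr, crb, cbr, and_self, and_true, true_and, and_false,
            false_and, if_true, if_false, Nat.sub_zero, Nat.add_zero, reduceIte]
          simp only [List.length_cons, List.count_cons] at hcnt hdb hdr ⊢
          omega
        · left
          rw [chipCount, chipCount, totalChips, totalChips, totalChips, totalChips]
          dsimp only
          simp only [hact, cob, cor, cbb, crr, crb, cbr, and_self, and_true, true_and, and_false,
            false_and, if_true, if_false, Nat.sub_zero, Nat.add_zero, reduceIte]
          simp only [List.length_cons, List.count_cons] at hcnt hdb hdr ⊢
          omega
      | r =>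
        have hcntr : 0 < (s.board.getD i []).count Color.r :=
          count_pos_of_head _ _ hcap
        obtain ⟨hSle, _⟩ := SRboard_longSum (s.board.set i []) halt'
        simp only [longSum_eq] at hSle
        have hgP := sum_map_set gainP s.board i [] [] hi
        have hgb0 : gainP ([] : Pile) = 0 := by simp [gainP]
        rw [hgb0] at hgP
        have hgmem : gainP (s.board.getD i []) ≤ (s.board.map gainP).sum :=
          mem_le_sum _ hmem
        have hgval : gainP (s.board.getD i []) +
            (if (s.board.getD i []).contains Color.b then 0 else 1) =
            (s.board.getD i []).count Color.r := by
          rw [gainP, if_pos hcap]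
          split <;> omega
        have hf1 : (if (s.board.getD i []).contains Color.b then (0:ℕ) else 1) ≤ 1 := by
          split <;> omega
        refine ⟨Or.inr ⟨rfl, halt', ?_, ?_⟩, ?_, ?_⟩
        · dsimp only
          simp only [hact, cob, cor, cbb, crr, crb, cbr, and_self, and_true, true_and, and_false,
            false_and, if_true, if_false, Nat.sub_zero, Nat.add_zero, reduceIte]
          simp only [List.count_cons_self]
          omega
        · dsimp only
          simp only [longSum_eq, capGain]
          simp only [hact, cob, cor, cbb, crr, crb, cbr, and_self, and_true, true_and, and_false,
            false_and, if_true, if_false, Nat.sub_zero, Nat.add_zero, reduceIte]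
          have g1 : gB (s.board.getD i []) = 0 := by
            rw [gB, if_neg]
            rintro ⟨-, hb⟩
            rw [hcap] at hb
            simp at hb
          rw [g1] at hLS
          simp only [List.count_cons_self]
          omega
        · rw [chipCount, chipCount, totalChips, totalChips, totalChips, totalChips]
          dsimp only
          simp only [hact, cob, cor, cbb, crr, crb, cbr, and_self, and_true, true_and, and_false,
            false_and, if_true, if_false, Nat.sub_zero, Nat.add_zero, reduceIte]
          simp only [List.length_cons, List.count_cons] at hcnt hdb hdr ⊢
          omega
        · left
          rw [chipCount, chipCount, totalChips, totalChips, totalChips, totalChips]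
          dsimp only
          simp only [hact, cob, cor, cbb, crr, crb, cbr, and_self, and_true, true_and, and_false,
            false_and, if_true, if_false, Nat.sub_zero, Nat.add_zero, reduceIte]
          simp only [List.length_cons, List.count_cons] at hcnt hdb hdr ⊢
          omega
  | discardPrisoner u hc =>
    rw [hact] at hc
    simp only [cob] at hc
    have hoth : s.active.other = Color.r := by rw [hact]; rfl
    refine ⟨Or.inl ⟨hact, halt, ?_⟩, ?_, ?_⟩
    · dsimp only
      simp only [longSum_eq]
      simp only [hoth, hact, cob, cor, cbb, crr, crb, cbr, and_self, and_true, true_and, and_false,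
        false_and, if_true, if_false, Nat.sub_zero, Nat.add_zero, reduceIte]
      exact hineq
    · rw [chipCount, chipCount, totalChips, totalChips, totalChips, totalChips]
      dsimp only
      simp only [hoth, hact, cob, cor, cbb, crr, crb, cbr, and_self, and_true, true_and, and_false,
        false_and, if_true, if_false, Nat.sub_zero, Nat.add_zero, reduceIte]
      omega
    · right
      rw [totalChips, totalChips]
      dsimp only
      simp only [hoth, hact, cob, cor, cbb, crr, crb, cbr, and_self, and_true, true_and, and_false,
        false_and, if_true, if_false, Nat.sub_zero, Nat.add_zero, reduceIte]
      omega
  | donatePrisoner u hc =>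
    rw [hact] at hc
    simp only [cob] at hc
    have hoth : s.active.other = Color.r := by rw [hact]; rfl
    refine ⟨Or.inl ⟨hact, halt, ?_⟩, ?_, ?_⟩
    · dsimp only
      simp only [longSum_eq]
      simp only [hoth, hact, cob, cor, cbb, crr, crb, cbr, and_self, and_true, true_and, and_false,
        false_and, if_true, if_false, Nat.sub_zero, Nat.add_zero, reduceIte]
      omega
    · rw [chipCount, chipCount, totalChips, totalChips, totalChips, totalChips]
      dsimp only
      simp only [hoth, hact, cob, cor, cbb, crr, crb, cbr, and_self, and_true, true_and, and_false,
        false_and, if_true, if_false, Nat.sub_zero, Nat.add_zero, reduceIte]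
      omega
    · right
      rw [totalChips, totalChips]
      dsimp only
      simp only [hoth, hact, cob, cor, cbb, crr, crb, cbr, and_self, and_true, true_and, and_false,
        false_and, if_true, if_false, Nat.sub_zero, Nat.add_zero, reduceIte]
      omega
lemma main_win : ∀ (N : ℕ) (s : GState), meas s < N → GoodB s ∨ GoodR s →
    WinsWithS Color.r s := by
  intro N
  induction N with
  | zero => intro s h _; exact absurd h (Nat.not_lt_zero _)
  | succ N ih =>
      intro s hm hg
      rcases hg with hB | hR
      · obtain ⟨hact, halt, hineq⟩ := hB
        by_cases h0 : totalChips s s.active = 0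
        · exact WinsWithS.elim s (by simp [hact]) h0
        · refine WinsWithS.theirs s (by simp [hact]) (Nat.pos_of_ne_zero h0) ?_
          intro s' hst
          obtain ⟨hg', hC, hdec⟩ := blue_step s s' hact halt hineq hst
          refine ih s' ?_ hg'
          have := meas_lt s s' hC
            (by rcases hdec with h | h
                · exact Or.inl h
                · exact Or.inr (Or.inl h))
          omega
      · have hcopy := hR
        obtain ⟨hact, halt, hr, hnum⟩ := hR
        obtain ⟨hGB, hlt⟩ := GoodR_SRound s hcopy
        refine WinsWithS.mine s hact hr ?_
        refine ih (SRound s) ?_ (Or.inl hGB)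
        omega
/-- **Type II, Red wins when Blue plays on `β`.**  Let the board be of
type II (all piles alternating, exactly one long `r`-pile and exactly one
long `b`-pile `β`) and let Blue be the active player.  If `m_b ≥ 0` and
`m_b + |β|_b ≤ n_r` when Blue's turn starts, and Blue places a chip (blue or
red) on the long `b`-pile `β` during their current round, then Red wins by
applying strategy `S` at every one of Red's rounds. -/
theorem typeII_red_wins_play_on_beta (s : GState)
    (halt : Alternating s.board)
    (hroom : chipCount s ≤ s.board.length)
    (hactive : s.active = Color.b)
    (hII₁ : (longPiles Color.r s.board).length = 1)
    (hII₂ : (longPiles Color.b s.board).length = 1)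
    (h : s.chips Color.b Color.b + longSum Color.b s.board
        ≤ s.chips Color.r Color.r) :
    ∀ (i : ℕ) (s' : GState),
      2 ≤ (s.board.getD i []).length →
      (s.board.getD i []).head? = some Color.b →
      PlaceOn i s s' →
      WinsWithS Color.r s' := by
  intro i s' _ _ hp
  obtain ⟨hg', -, -⟩ := blue_step s s' hactive halt h (Step.place i s s' hp)
  exact main_win (meas s' + 1) s' (Nat.lt_succ_self _) hg'
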